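/- For integers n ≥ 3 and k ≥ 0, the crown S_n^k contains a strict alternating cycle of size 3 among its incomparable pairs if and only if n ≤ 2k. Consequently, there exists an independent non-reversible set of critical pairs in G_n^k iff n ≤ 2k. -/

import Mathlib

namespace CrownPaper

/-- Indices of the crown `S_n^k` live in `ZMod (n+k)`. The minimal element `a_i` is
incomparable to the maximal element `b_j` iff `(j - i) mod (n+k) ≤ k`. -/
def Incomp (n k : ℕ) (i j : ZMod (n + k)) : Prop := (j - i).val ≤ k

/-- `a_i < b_j` in the crown `S_n^k` iff `(j - i) mod (n+k) > k`. -/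
def CompLt (n k : ℕ) (i j : ZMod (n + k)) : Prop := k < (j - i).val

/-- A pair `(a_i, b_j)` is recorded as its pair of indices. -/
abbrev Pair (n k : ℕ) := ZMod (n + k) × ZMod (n + k)

/-- `(a_i, b_j)` is an incomparable (critical) pair. -/
def IsIncPair (n k : ℕ) (p : Pair n k) : Prop := Incomp n k p.1 p.2

/-- Adjacency in the graph `G_n^k` of critical pairs: `(a_i,b_j)` and `(a_p,b_q)` are
adjacent iff `a_i < b_q` and `a_p < b_j` in `S_n^k`. -/
def Adj (n k : ℕ) (p q : Pair n k) : Prop :=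
  CompLt n k p.1 q.2 ∧ CompLt n k q.1 p.2

/-- An independent set of critical pairs in `G_n^k`. -/
def Indep (n k : ℕ) (S : Set (Pair n k)) : Prop :=
  (∀ p ∈ S, IsIncPair n k p) ∧ ∀ p ∈ S, ∀ q ∈ S, ¬ Adj n k p q

/-- A set of pairs is reversible when some linear extension of the crown (encoded as an
injective map into `ℕ` on the disjoint union `A ⊕ B` preserving all strict comparabilities
`a_i < b_j`) puts `a` above `b` for every pair `(a,b)` of the set. -/
def Reversible (n k : ℕ) (S : Set (Pair n k)) : Prop :=
  ∃ f : (ZMod (n + k)) ⊕ (ZMod (n + k)) → ℕ,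
    Function.Injective f ∧
    (∀ i j : ZMod (n + k), CompLt n k i j → f (Sum.inl i) < f (Sum.inr j)) ∧
    ∀ p ∈ S, f (Sum.inr p.2) < f (Sum.inl p.1)

/-! ### Auxiliary lemmas -/

lemma two_mul_bound {m a b : ℕ} (hm : 0 < m) (h : a % m = b) (h2 : a < 2*m) :
    a = b ∨ a = b + m := by
  have h3 := Nat.div_add_mod a m
  rcases hq : a / m with _ | _ | q <;> rw [hq] at h3
  · omega
  · omega
  · exfalso
    have hge : 2 * m ≤ m * (q + 2) := by
      calc 2 * m = m * 2 := by ring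
        _ ≤ m * (q + 2) := Nat.mul_le_mul_left m (by omega)
    set A := m * (q + 2) with hA
    omega

lemma three_mul_bound {m a : ℕ} (hm : 0 < m) (h : a % m = 0) (h2 : a < 3*m) :
    a = 0 ∨ a = m ∨ a = 2*m := by
  have h3 := Nat.div_add_mod a m
  rcases hq : a / m with _ | _ | _ | q <;> rw [hq] at h3
  · omega
  · omega
  · omega
  · exfalso
    have hge : 3 * m ≤ m * (q + 3) := by
      calc 3 * m = m * 3 := by ring
        _ ≤ m * (q + 3) := Nat.mul_le_mul_left m (by omega)
    set A := m * (q + 3) with hA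
    omega

lemma val_sub_nat (m u v w : ℕ) [NeZero m] (hw : w < m) (h : v + w = u ∨ v + w = u + m) :
    ((u : ZMod m) - v).val = w := by
  have hcast : (u : ZMod m) - v = (w : ZMod m) := by
    rcases h with h | h
    · have h2 : ((v + w : ℕ) : ZMod m) = ((u : ℕ) : ZMod m) := by rw [h]
      push_cast at h2
      linear_combination -h2
    · have h2 : ((v + w : ℕ) : ZMod m) = ((u + m : ℕ) : ZMod m) := by rw [h]
      push_cast at h2
      have h3 : ((m : ℕ) : ZMod m) = 0 := ZMod.natCast_self m
      linear_combination -h2 - h3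
  rw [hcast, ZMod.val_cast_of_lt hw]

/-- The key arithmetic lemma: the numerical pattern of a strict alternating cycle of
size 3 is impossible when `n > 2k`. -/
lemma lemA (n k : ℕ) (hn : 3 ≤ n) (hbig : 2 * k + 1 ≤ n)
    (x0 x1 x2 y0 y1 y2 : ZMod (n + k))
    (he0 : (y0 - x0).val ≤ k) (he1 : (y1 - x1).val ≤ k) (he2 : (y2 - x2).val ≤ k)
    (hf0 : k < (y0 - x1).val) (hf1 : k < (y1 - x2).val) (hf2 : k < (y2 - x0).val)
    (hg0 : (y1 - x0).val ≤ k) (hg1 : (y2 - x1).val ≤ k) (hg2 : (y0 - x2).val ≤ k) :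
    False := by
  haveI : NeZero (n + k) := ⟨by omega⟩
  have hm : 0 < n + k := by omega
  have V : ∀ a : ZMod (n + k), a.val < n + k := fun a => ZMod.val_lt a
  have E0 : ((y0 - x1).val + (x1 - x0).val) % (n + k) = (y0 - x0).val := by
    rw [← ZMod.val_add]; congr 1; ring
  have E1 : ((y1 - x2).val + (x2 - x1).val) % (n + k) = (y1 - x1).val := by
    rw [← ZMod.val_add]; congr 1; ring
  have E2 : ((y2 - x0).val + (x0 - x2).val) % (n + k) = (y2 - x2).val := by
    rw [← ZMod.val_add]; congr 1; ring
  have G0 : ((y1 - x1).val + (x1 - x0).val) % (n + k) = (y1 - x0).val := by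
    rw [← ZMod.val_add]; congr 1; ring
  have G1 : ((y2 - x2).val + (x2 - x1).val) % (n + k) = (y2 - x1).val := by
    rw [← ZMod.val_add]; congr 1; ring
  have G2 : ((y0 - x0).val + (x0 - x2).val) % (n + k) = (y0 - x2).val := by
    rw [← ZMod.val_add]; congr 1; ring
  have HS : ((x1 - x0).val + (x2 - x1).val + (x0 - x2).val) % (n + k) = 0 := by
    have hz : ((x1 - x0) + (x2 - x1) + (x0 - x2) : ZMod (n + k)) = 0 := by ring
    have h1 := ZMod.val_add ((x1 - x0) + (x2 - x1)) (x0 - x2)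
    rw [hz, ZMod.val_zero, ZMod.val_add, Nat.mod_add_mod] at h1
    omega
  have D0 := two_mul_bound hm E0 (by have := V (y0 - x1); have := V (x1 - x0); omega)
  have D1 := two_mul_bound hm E1 (by have := V (y1 - x2); have := V (x2 - x1); omega)
  have D2 := two_mul_bound hm E2 (by have := V (y2 - x0); have := V (x0 - x2); omega)
  have D3 := two_mul_bound hm G0 (by have := V (y1 - x1); have := V (x1 - x0); omega)
  have D4 := two_mul_bound hm G1 (by have := V (y2 - x2); have := V (x2 - x1); omega)
  have D5 := two_mul_bound hm G2 (by have := V (y0 - x0); have := V (x0 - x2); omega)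
  have D6 := three_mul_bound hm HS
    (by have := V (x1 - x0); have := V (x2 - x1); have := V (x0 - x2); omega)
  have B0 := V (y0 - x0); have B1 := V (y1 - x1); have B2 := V (y2 - x2)
  have B3 := V (y0 - x1); have B4 := V (y1 - x2); have B5 := V (y2 - x0)
  have B6 := V (y1 - x0); have B7 := V (y2 - x1); have B8 := V (y0 - x2)
  have B9 := V (x1 - x0); have B10 := V (x2 - x1); have B11 := V (x0 - x2)
  rcases D0 with D0 | D0 <;> rcases D1 with D1 | D1 <;> rcases D2 with D2 | D2 <;>
    rcases D3 with D3 | D3 <;> rcases D4 with D4 | D4 <;> rcases D5 with D5 | D5 <;>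
    rcases D6 with D6 | D6 | D6 <;> omega

/-- Builder for strict alternating cycles of size 3 from explicit numerical data. -/
lemma build_cycle (n k : ℕ) (hm : 0 < n + k) (u0 u1 u2 w0 w1 w2 : ℕ)
    (hI00 : ((w0 : ZMod (n + k)) - u0).val ≤ k)
    (hI01 : ((w1 : ZMod (n + k)) - u0).val ≤ k)
    (hC02 : k < ((w2 : ZMod (n + k)) - u0).val)
    (hC10 : k < ((w0 : ZMod (n + k)) - u1).val)
    (hI11 : ((w1 : ZMod (n + k)) - u1).val ≤ k)
    (hI12 : ((w2 : ZMod (n + k)) - u1).val ≤ k)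
    (hI20 : ((w0 : ZMod (n + k)) - u2).val ≤ k)
    (hC21 : k < ((w1 : ZMod (n + k)) - u2).val)
    (hI22 : ((w2 : ZMod (n + k)) - u2).val ≤ k) :
    ∃ x y : ZMod 3 → ZMod (n + k),
      (∀ α : ZMod 3, Incomp n k (x α) (y α)) ∧
      (∀ α β : ZMod 3, (CompLt n k (x α) (y β) ↔ β = α - 1)) := by
  have htri : ∀ γ : ZMod 3, γ = 0 ∨ γ = 1 ∨ γ = 2 := by decide
  have d10 : ¬ (1 : ZMod 3) = 0 := by decide
  have d20 : ¬ (2 : ZMod 3) = 0 := by decide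
  have d21 : ¬ (2 : ZMod 3) = 1 := by decide
  refine ⟨fun α => if α = 0 then (u0 : ZMod (n + k)) else if α = 1 then u1 else u2,
          fun α => if α = 0 then (w0 : ZMod (n + k)) else if α = 1 then w1 else w2,
          ?_, ?_⟩
  · intro α
    rcases htri α with rfl | rfl | rfl <;> beta_reduce
    · rw [if_pos rfl, if_pos rfl]; exact hI00
    · rw [if_neg d10, if_pos rfl, if_neg d10, if_pos rfl]; exact hI11
    · rw [if_neg d20, if_neg d21, if_neg d20, if_neg d21]; exact hI22
  · intro α β
    rcases htri α with rfl | rfl | rfl <;> rcases htri β with rfl | rfl | rfl <;> beta_reduce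
    · rw [if_pos rfl, if_pos rfl]
      exact iff_of_false (not_lt.mpr hI00) (by decide)
    · rw [if_pos rfl, if_neg d10, if_pos rfl]
      exact iff_of_false (not_lt.mpr hI01) (by decide)
    · rw [if_pos rfl, if_neg d20, if_neg d21]
      exact iff_of_true hC02 (by decide)
    · rw [if_neg d10, if_pos rfl, if_pos rfl]
      exact iff_of_true hC10 (by decide)
    · rw [if_neg d10, if_pos rfl, if_neg d10, if_pos rfl]
      exact iff_of_false (not_lt.mpr hI11) (by decide)
    · rw [if_neg d10, if_pos rfl, if_neg d20, if_neg d21]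
      exact iff_of_false (not_lt.mpr hI12) (by decide)
    · rw [if_neg d20, if_neg d21, if_pos rfl]
      exact iff_of_false (not_lt.mpr hI20) (by decide)
    · rw [if_neg d20, if_neg d21, if_neg d10, if_pos rfl]
      exact iff_of_true hC21 (by decide)
    · rw [if_neg d20, if_neg d21, if_neg d20, if_neg d21]
      exact iff_of_false (not_lt.mpr hI22) (by decide)

/-- Part 1 of the statement: a strict alternating cycle of size 3 exists iff `n ≤ 2k`. -/
lemma cycle3_iff (n k : ℕ) (hn : 3 ≤ n) :
    (∃ x y : ZMod 3 → ZMod (n + k),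
        (∀ α : ZMod 3, Incomp n k (x α) (y α)) ∧
        (∀ α β : ZMod 3, (CompLt n k (x α) (y β) ↔ β = α - 1))) ↔ n ≤ 2 * k := by
  haveI : NeZero (n + k) := ⟨by omega⟩
  constructor
  · rintro ⟨x, y, hinc, hcyc⟩
    by_contra hlt
    push_neg at hlt
    have hkey : ∀ γ : ZMod 3, γ + 1 ≠ γ - 1 := by decide
    have hg : ∀ α : ZMod 3, (y (α + 1) - x α).val ≤ k := by
      intro α
      have hnc : ¬ CompLt n k (x α) (y (α + 1)) := fun hc =>
        absurd ((hcyc α (α + 1)).mp hc) (hkey α)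
      exact not_lt.mp hnc
    have hg0 := hg 0; have hg1 := hg 1; have hg2 := hg 2
    rw [show (0 : ZMod 3) + 1 = 1 from by decide] at hg0
    rw [show (1 : ZMod 3) + 1 = 2 from by decide] at hg1
    rw [show (2 : ZMod 3) + 1 = 0 from by decide] at hg2
    exact lemA n k hn (by omega) (x 0) (x 1) (x 2) (y 0) (y 1) (y 2)
      (hinc 0) (hinc 1) (hinc 2)
      ((hcyc 1 0).mpr (by decide)) ((hcyc 2 1).mpr (by decide)) ((hcyc 0 2).mpr (by decide))
      hg0 hg1 hg2
  · intro h2k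
    rcases le_or_gt n (k + 1) with hc | hc
    · -- construction for n ≤ k + 1 : x = (1, 2, k+2), y = (1, k+1, k+2)
      refine build_cycle n k (by omega) 1 2 (k+2) 1 (k+1) (k+2) ?_ ?_ ?_ ?_ ?_ ?_ ?_ ?_ ?_
      · rw [val_sub_nat (n+k) 1 1 0 (by omega) (by omega)]; omega
      · rw [val_sub_nat (n+k) (k+1) 1 k (by omega) (by omega)]
      · rw [val_sub_nat (n+k) (k+2) 1 (k+1) (by omega) (by omega)]; omega
      · rw [val_sub_nat (n+k) 1 2 (n+k-1) (by omega) (by omega)]; omega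
      · rw [val_sub_nat (n+k) (k+1) 2 (k-1) (by omega) (by omega)]; omega
      · rw [val_sub_nat (n+k) (k+2) 2 k (by omega) (by omega)]
      · rw [val_sub_nat (n+k) 1 (k+2) (n-1) (by omega) (by omega)]; omega
      · rw [val_sub_nat (n+k) (k+1) (k+2) (n+k-1) (by omega) (by omega)]; omega
      · rw [val_sub_nat (n+k) (k+2) (k+2) 0 (by omega) (by omega)]; omega
    · -- construction for k + 2 ≤ n ≤ 2k : x = (1, k+1, 2k+1), y = (2k+1-n, k+1, 2k+1)
      refine build_cycle n k (by omega) 1 (k+1) (2*k+1) (2*k+1-n) (k+1) (2*k+1) ?_ ?_ ?_ ?_ ?_ ?_ ?_ ?_ ?_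
      · rw [val_sub_nat (n+k) (2*k+1-n) 1 (2*k-n) (by omega) (by omega)]; omega
      · rw [val_sub_nat (n+k) (k+1) 1 k (by omega) (by omega)]
      · rw [val_sub_nat (n+k) (2*k+1) 1 (2*k) (by omega) (by omega)]; omega
      · rw [val_sub_nat (n+k) (2*k+1-n) (k+1) (2*k) (by omega) (by omega)]; omega
      · rw [val_sub_nat (n+k) (k+1) (k+1) 0 (by omega) (by omega)]; omega
      · rw [val_sub_nat (n+k) (2*k+1) (k+1) k (by omega) (by omega)]
      · rw [val_sub_nat (n+k) (2*k+1-n) (2*k+1) k (by omega) (by omega)]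
      · rw [val_sub_nat (n+k) (k+1) (2*k+1) n (by omega) (by omega)]; omega
      · rw [val_sub_nat (n+k) (2*k+1) (2*k+1) 0 (by omega) (by omega)]; omega


/-! ### Machinery for Part 2 -/

/-- The digraph on `A ⊕ B` whose topological orders are the linear extensions reversing
all pairs of `S`. -/
def Rel (n k : ℕ) (S : Set (Pair n k)) :
    (ZMod (n + k) ⊕ ZMod (n + k)) → (ZMod (n + k) ⊕ ZMod (n + k)) → Prop
  | Sum.inl i, Sum.inr j => CompLt n k i j
  | Sum.inr j, Sum.inl i => (i, j) ∈ S
  | _, _ => False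

/-- If the digraph has no directed cycle then `S` is reversible. -/
lemma rev_of_acyclic (n k : ℕ) (hn : 3 ≤ n) (S : Set (Pair n k))
    (hac : ∀ u, ¬ Relation.TransGen (Rel n k S) u u) : Reversible n k S := by
  classical
  haveI : NeZero (n + k) := ⟨by omega⟩
  have hpo : IsPartialOrder _ (Relation.ReflTransGen (Rel n k S)) :=
    { refl := fun a => Relation.ReflTransGen.refl
      trans := fun a b c hab hbc => hab.trans hbc
      antisymm := fun a b hab hba => by
        by_contra hne
        rcases Relation.reflTransGen_iff_eq_or_transGen.mp hab with h | h
        · exact hne h.symm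
        · exact hac a (Relation.TransGen.trans_left h hba) }
  obtain ⟨s, hlin, hsub⟩ := @extend_partialOrder _ (Relation.ReflTransGen (Rel n k S)) hpo
  haveI := hlin
  set f : (ZMod (n + k) ⊕ ZMod (n + k)) → ℕ := fun u => {v | s v u ∧ v ≠ u}.ncard with hf
  have hmono : ∀ u v, s u v → u ≠ v → f u < f v := by
    intro u v hs hne
    apply Set.ncard_lt_ncard
    · constructor
      · rintro w ⟨hw1, hw2⟩
        refine ⟨IsTrans.trans _ _ _ hw1 hs, fun heq => ?_⟩
        exact hne (Std.Antisymm.antisymm _ _ hs (heq ▸ hw1))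
      · intro hrev
        have : u ∈ {w | s w v ∧ w ≠ v} := ⟨hs, hne⟩
        exact (hrev this).2 rfl
    · exact Set.toFinite _
  have hinj : Function.Injective f := by
    intro a b hab
    by_contra hne
    rcases Std.Total.total (r := s) a b with h | h
    · exact absurd hab (Nat.ne_of_lt (hmono a b h hne))
    · exact absurd hab.symm (Nat.ne_of_lt (hmono b a h (Ne.symm hne)))
  refine ⟨f, hinj, ?_, ?_⟩
  · intro i j hij
    exact hmono _ _
      (hsub _ _ (Relation.ReflTransGen.single
        (show Rel n k S (Sum.inl i) (Sum.inr j) from hij))) (by simp)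
  · intro p hp
    exact hmono _ _
      (hsub _ _ (Relation.ReflTransGen.single
        (show Rel n k S (Sum.inr p.2) (Sum.inl p.1) from hp))) (by simp)

lemma mod_succ_step (s m : ℕ) :
    (m % (s+1) = s ∧ (m+1) % (s+1) = 0) ∨
    (m % (s+1) < s ∧ (m+1) % (s+1) = m % (s+1) + 1) := by
  have h1 : m % (s+1) < s + 1 := Nat.mod_lt _ (Nat.succ_pos s)
  have h3 := Nat.div_add_mod m (s+1)
  set A := (s+1) * (m / (s+1)) with hA
  rcases eq_or_lt_of_le (Nat.lt_succ_iff.mp h1) with h | h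
  · left
    refine ⟨h, ?_⟩
    have hm1 : m + 1 = (s+1) * (m / (s+1) + 1) := by
      rw [Nat.mul_add, Nat.mul_one, ← hA]; omega
    rw [hm1, Nat.mul_mod_right]
  · right
    refine ⟨h, ?_⟩
    have hm1 : m + 1 = A + (m % (s+1) + 1) := by omega
    rw [hm1, hA, Nat.mul_add_mod]
    exact Nat.mod_eq_of_lt (by omega)

/-- An alternating cycle through `S` of length `t`, presented as a `t`-periodic walk. -/
def IsCycle (n k : ℕ) (S : Set (Pair n k)) (t : ℕ) : Prop :=
  ∃ P : ℕ → Pair n k, (∀ m, P m ∈ S) ∧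
    (∀ m, CompLt n k (P m).1 (P (m+1)).2) ∧ ∀ m, P (m + t) = P m

lemma glue (n k : ℕ) (S : Set (Pair n k)) (p : ℕ → Pair n k) (s : ℕ)
    (hmem : ∀ m, m ≤ s → p m ∈ S)
    (hedge : ∀ m, m < s → CompLt n k (p m).1 (p (m+1)).2)
    (hclose : CompLt n k (p s).1 (p 0).2) :
    IsCycle n k S (s+1) := by
  refine ⟨fun m => p (m % (s+1)),
    fun m => hmem _ (Nat.lt_succ_iff.mp (Nat.mod_lt m (by omega : 0 < s + 1))), ?_,
    fun m => by simp only [Nat.add_mod_right]⟩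
  intro m
  beta_reduce
  rcases mod_succ_step s m with ⟨h1, h2⟩ | ⟨h1, h2⟩
  · rw [h1, h2]; exact hclose
  · rw [h2]; exact hedge _ h1

lemma shortcut (n k : ℕ) (S : Set (Pair n k)) (P : ℕ → Pair n k)
    (hmem : ∀ m, P m ∈ S) (hedge : ∀ m, CompLt n k (P m).1 (P (m+1)).2)
    (a b : ℕ) (hab : a ≤ b) (h : CompLt n k (P b).1 (P a).2) :
    IsCycle n k S (b - a + 1) := by
  apply glue n k S (fun m => P (a + m)) (b - a)
  · intro m _; exact hmem _
  · intro m _; exact hedge (a + m)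
  · show CompLt n k (P (a + (b - a))).1 (P (a + 0)).2
    rw [show a + (b - a) = b from by omega, show a + 0 = a from rfl]
    exact h

lemma cycle_of_transGen (n k : ℕ) (S : Set (Pair n k))
    (u : ZMod (n + k) ⊕ ZMod (n + k)) (h : Relation.TransGen (Rel n k S) u u) :
    ∃ t, 1 ≤ t ∧ IsCycle n k S t := by
  obtain ⟨j, hj⟩ : ∃ j, Relation.TransGen (Rel n k S) (Sum.inr j) (Sum.inr j) := by
    rcases u with i | j
    · rcases Relation.TransGen.head'_iff.mp h with ⟨w, hR, hRT⟩
      rcases w with i' | j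
      · cases hR
      · exact ⟨j, Relation.TransGen.tail' hRT hR⟩
    · exact ⟨j, h⟩
  have key : ∀ v, Relation.ReflTransGen (Rel n k S) (Sum.inr j) v →
      v = Sum.inr j ∨
      ∃ (s : ℕ) (p : ℕ → Pair n k), (∀ m, m ≤ s → p m ∈ S) ∧
        (∀ m, m < s → CompLt n k (p m).1 (p (m+1)).2) ∧ (p 0).2 = j ∧
        ((∃ i, v = Sum.inl i ∧ (p s).1 = i) ∨
         (∃ j', v = Sum.inr j' ∧ CompLt n k (p s).1 j')) := by
    intro v hv
    induction hv with
    | refl => exact Or.inl rfl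
    | @tail b c hwb hbc ih =>
      rcases ih with rfl | ⟨s, p, hmem, hedge, hp0, hend⟩
      · rcases c with i | j'
        · exact Or.inr ⟨0, fun _ => (i, j), fun m _ => hbc,
            fun m hm => absurd hm (by omega), rfl, Or.inl ⟨i, rfl, rfl⟩⟩
        · cases hbc
      · rcases hend with ⟨i, rfl, hps⟩ | ⟨j', rfl, hps⟩
        · rcases c with i' | j'
          · cases hbc
          · exact Or.inr ⟨s, p, hmem, hedge, hp0,
              Or.inr ⟨j', rfl, by rw [hps]; exact hbc⟩⟩
        · rcases c with i | j''
          · refine Or.inr ⟨s+1, fun m => if m ≤ s then p m else (i, j'), ?_, ?_, ?_,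
              Or.inl ⟨i, rfl, ?_⟩⟩
            · intro m _
              by_cases hms : m ≤ s
              · simp only [if_pos hms]; exact hmem m hms
              · simp only [if_neg hms]; exact hbc
            · intro m hm
              by_cases hms : m < s
              · have h1 : m ≤ s := by omega
                have h2 : m + 1 ≤ s := by omega
                beta_reduce
                rw [if_pos h1, if_pos h2]
                exact hedge m hms
              · have hm1 : m = s := by omega
                beta_reduce
                rw [hm1, if_pos (le_refl s), if_neg (by omega : ¬ s + 1 ≤ s)]
                exact hps
            · beta_reduce
              rw [if_pos (Nat.zero_le s)]
              exact hp0
            · beta_reduce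
              rw [if_neg (by omega : ¬ s + 1 ≤ s)]
          · cases hbc
  rcases Relation.TransGen.tail'_iff.mp hj with ⟨w, hRT, hR⟩
  rcases w with i | j'
  · rcases key _ hRT with heq | ⟨s, p, hmem, hedge, hp0, hend⟩
    · exact absurd heq (by simp)
    · rcases hend with ⟨i', heq, hps⟩ | ⟨j'', heq, _⟩
      · have hii : i = i' := by injection heq
        refine ⟨s + 1, by omega, glue n k S p s hmem hedge ?_⟩
        rw [hps, hp0, ← hii]
        exact hR
      · exact absurd heq (by simp)
  · cases hR

/-- Forward direction of Part 2. -/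
lemma part2_forward (n k : ℕ) (hn : 3 ≤ n) (S : Set (Pair n k))
    (hS : Indep n k S) (hnr : ¬ Reversible n k S) : n ≤ 2 * k := by
  classical
  by_contra hbig
  push_neg at hbig
  obtain ⟨u, hu⟩ : ∃ u, Relation.TransGen (Rel n k S) u u := by
    by_contra hac
    push_neg at hac
    exact hnr (rev_of_acyclic n k hn S hac)
  have hEx : ∃ t, 1 ≤ t ∧ IsCycle n k S t := cycle_of_transGen n k S u hu
  obtain ⟨ht1, P, hmem, hedge, hper⟩ := Nat.find_spec hEx
  set t := Nat.find hEx with htdef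
  have hmin : ∀ t', t' < t → ¬ (1 ≤ t' ∧ IsCycle n k S t') := fun t' ht' =>
    Nat.find_min hEx ht'
  have hshort : ∀ a b : ℕ, a ≤ b → b - a + 1 < t → ¬ CompLt n k (P b).1 (P a).2 := by
    intro a b hab hlt hc
    exact hmin _ hlt ⟨by omega, shortcut n k S P hmem hedge a b hab hc⟩
  have hinc : ∀ m, ((P m).2 - (P m).1).val ≤ k := fun m => hS.1 _ (hmem m)
  have ht3 : 3 ≤ t := by
    by_contra hl
    push_neg at hl
    have ht12 : t = 1 ∨ t = 2 := by omega
    rcases ht12 with ht' | ht'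
    · have h01 : P 1 = P 0 := by have := hper 0; rwa [ht', Nat.zero_add] at this
      have he := hedge 0
      rw [h01] at he
      exact absurd he (not_lt.mpr (hinc 0))
    · have h02 : P 2 = P 0 := by have := hper 0; rwa [ht', Nat.zero_add] at this
      have he1 := hedge 1
      rw [h02] at he1
      exact hS.2 _ (hmem 0) _ (hmem 1) ⟨hedge 0, he1⟩
  have hP0t : P t = P 0 := by have := hper 0; rwa [Nat.zero_add] at this
  have hP1t : P (t + 1) = P 1 := by have := hper 1; rwa [Nat.add_comm 1 t] at this
  have hs1 : ¬ CompLt n k (P 0).1 (P 2).2 := by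
    rw [← hP0t]; exact hshort 2 t (by omega) (by omega)
  have hs2 : ¬ CompLt n k (P 1).1 (P 3).2 := by
    rw [← hP1t]; exact hshort 3 (t+1) (by omega) (by omega)
  have hs3 : ¬ CompLt n k (P 2).1 (P 1).2 := hshort 1 2 (by omega) (by omega)
  have hs4 : ¬ CompLt n k (P 0).1 (P 3).2 := by
    rw [← hP0t]; exact hshort 3 t (by omega) (by omega)
  exact lemA n k hn (by omega) (P 0).1 (P 1).1 (P 2).1 (P 2).2 (P 3).2 (P 1).2
    (not_lt.mp hs1) (not_lt.mp hs2) (not_lt.mp hs3)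
    (hedge 1) (hedge 2) (hedge 0)
    (not_lt.mp hs4) (hinc 1) (hinc 2)

/-- the crown `S_n^k` contains a strict alternating cycle of size `3` iff
`n ≤ 2k`; consequently an independent non-reversible set of critical pairs exists in
`G_n^k` iff `n ≤ 2k`. -/
theorem strictAltCycle3_and_INR_iff (n k : ℕ) (hn : 3 ≤ n) :
    ((∃ x y : ZMod 3 → ZMod (n + k),
        (∀ α : ZMod 3, Incomp n k (x α) (y α)) ∧
        (∀ α β : ZMod 3, (CompLt n k (x α) (y β) ↔ β = α - 1))) ↔ n ≤ 2 * k) ∧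
    ((∃ S : Set (Pair n k), Indep n k S ∧ ¬ Reversible n k S) ↔ n ≤ 2 * k) := by
  have part1 := cycle3_iff n k hn
  refine ⟨part1, ?_, ?_⟩
  · rintro ⟨S, hS, hnr⟩
    exact part2_forward n k hn S hS hnr
  · intro h2k
    obtain ⟨x, y, hinc, hcyc⟩ := part1.mpr h2k
    refine ⟨{p | ∃ α : ZMod 3, p = (x α, y α)}, ⟨?_, ?_⟩, ?_⟩
    · rintro p ⟨α, rfl⟩; exact hinc α
    · rintro p ⟨α, rfl⟩ q ⟨β, rfl⟩ ⟨h1, h2⟩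
      have hα := (hcyc α β).mp h1
      have hβ := (hcyc β α).mp h2
      have hno : ∀ a b : ZMod 3, b = a - 1 → a = b - 1 → False := by decide
      exact hno α β hα hβ
    · rintro ⟨f, finj, fcomp, frev⟩
      have key : ∀ α : ZMod 3, f (Sum.inr (y α)) < f (Sum.inr (y (α - 1))) := fun α =>
        lt_trans (frev (x α, y α) ⟨α, rfl⟩) (fcomp _ _ ((hcyc α (α - 1)).mpr rfl))
      have k0 := key 0; have k1 := key 1; have k2 := key 2
      rw [show (0 : ZMod 3) - 1 = 2 from by decide] at k0
      rw [show (1 : ZMod 3) - 1 = 0 from by decide] at k1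
      rw [show (2 : ZMod 3) - 1 = 1 from by decide] at k2
      omega

end CrownPaper
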